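/- Let q ≡ 3 (mod 4). The number of real conjugacy classes of PSL_2(q) is (q+1)/2, and every real class of PSL_2(q) is strongly real. -/

import Mathlib

/-- The projective special linear group `PSL₂(F) = SL₂(F)/Z(SL₂(F))`. -/
abbrev PSL2 (F : Type*) [Field F] :=
  Matrix.SpecialLinearGroup (Fin 2) F ⧸ Subgroup.center (Matrix.SpecialLinearGroup (Fin 2) F)

open Matrix Polynomial Finset

namespace SR18

variable {F : Type*} [Field F]

instance : Fact (Even (Fintype.card (Fin 2))) := ⟨1, rfl⟩

/-- The companion matrix of `x^2 - t*x + 1` as an element of `SL(2,F)`. -/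
def comp (t : F) : Matrix.SpecialLinearGroup (Fin 2) F :=
  ⟨!![0, -1; 1, t], by simp [det_fin_two_of]⟩

@[simp] lemma trace_comp (t : F) : ((comp t).val).trace = t := by
  simp [comp, trace_fin_two_of]

lemma det_one (A : Matrix.SpecialLinearGroup (Fin 2) F) :
    A.val 0 0 * A.val 1 1 - A.val 0 1 * A.val 1 0 = 1 := by
  have := A.2; rwa [det_fin_two] at this

/-- Solvability of diagonal binary quadratic equations over finite fields of odd char. -/
lemma quadSolve [Fintype F] (hodd : Fintype.card F % 2 = 1) {α β : F}
    (hα : α ≠ 0) (hβ : β ≠ 0) (γ : F) : ∃ x y : F, α * x ^ 2 + β * y ^ 2 = γ := by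
  obtain ⟨a, b, hab⟩ := FiniteField.exists_root_sum_quadratic
    (f := C α * X ^ 2 + C 0 * X + C (-γ)) (g := C β * X ^ 2 + C 0 * X + C 0)
    (Polynomial.degree_quadratic hα) (Polynomial.degree_quadratic hβ) hodd
  refine ⟨a, b, ?_⟩
  simp only [eval_add, eval_mul, eval_pow, eval_C, eval_X] at hab
  linear_combination hab

/-- 2x2 trace-type bilinear identity. -/
lemma mul_add_mul (A B : Matrix (Fin 2) (Fin 2) F) :
    B * A + A * B =
      A.trace • B + B.trace • A + ((B * A).trace - A.trace * B.trace) • 1 := by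
  rw [eta_fin_two A, eta_fin_two B]
  ext i j
  fin_cases i <;> fin_cases j <;>
    simp [mul_fin_two, trace_fin_two_of, one_fin_two, Matrix.add_apply, Matrix.smul_apply,
      smul_eq_mul] <;> ring

/-- Cayley–Hamilton for 2x2. -/
lemma cayley (A : Matrix (Fin 2) (Fin 2) F) :
    A * A = A.trace • A - A.det • 1 := by
  rw [eta_fin_two A]
  ext i j
  fin_cases i <;> fin_cases j <;>
    simp [mul_fin_two, trace_fin_two_of, det_fin_two_of, one_fin_two, Matrix.sub_apply,
      Matrix.smul_apply, smul_eq_mul] <;> ring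

lemma adj2 (A : Matrix (Fin 2) (Fin 2) F) :
    adjugate A = A.trace • 1 - A := by
  rw [adjugate_fin_two, eta_fin_two A]
  ext i j
  fin_cases i <;> fin_cases j <;>
    simp [trace_fin_two_of, one_fin_two, Matrix.sub_apply, Matrix.smul_apply, smul_eq_mul]

/-- Existence of a reversing element's entries. -/
lemma existsRev' [Fintype F] (hodd : Fintype.card F % 2 = 1)
    {a b c d : F} (hdet : a * d - b * c = 1) (ht : (a + d) ^ 2 ≠ 4) :
    ∃ x y z : F, x * (a - d) + y * c + z * b = 0 ∧ -x ^ 2 - y * z = 1 := by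
  have hdisc : (a - d) ^ 2 + 4 * (b * c) ≠ 0 := by
    intro h; apply ht
    have : (a+d)^2 = (a-d)^2 + 4*(b*c) + 4*(a*d - b*c) := by ring
    rw [this, h, hdet]; ring
  obtain ⟨X, W, hXW⟩ := SR18.quadSolve hodd (neg_ne_zero.mpr (one_ne_zero (α := F))) hdisc 1
  by_cases hc : c ≠ 0
  · set x := X + (a - d) * W with hx
    set z := 2 * c * W with hz
    set y := -(x * (a - d) + z * b) * c⁻¹ with hy
    have hyc : c * y = -(x * (a - d) + z * b) := by
      rw [hy]; field_simp
    refine ⟨x, y, z, by linear_combination hyc, ?_⟩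
    have := mul_left_cancel₀ hc (b := -x ^ 2 - y * z) (c := (1:F))
    apply this
    linear_combination c * hXW - z * hyc
  · push_neg at hc
    by_cases hb : b ≠ 0
    · set x := X + (a - d) * W with hx
      set yy := 2 * b * W with hyy
      set z := -(x * (a - d) + yy * c) * b⁻¹ with hz
      have hzb : b * z = -(x * (a - d) + yy * c) := by
        rw [hz]; field_simp
      refine ⟨x, yy, z, by linear_combination hzb, ?_⟩
      apply mul_left_cancel₀ hb (b := -x ^ 2 - yy * z) (c := (1:F))
      linear_combination b * hXW - yy * hzb
    · push_neg at hb
      exact ⟨0, 1, -1, by simp [hb, hc], by ring⟩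

/-- Key reversing lemma: any `A` in `SL(2,F)` with `(tr A)^2 ≠ 4` is inverted by an
element of trace zero. -/
lemma rev [Fintype F] (hodd : Fintype.card F % 2 = 1)
    (A : Matrix.SpecialLinearGroup (Fin 2) F) (h4 : ((A.val).trace)^2 ≠ 4) :
    ∃ h : Matrix.SpecialLinearGroup (Fin 2) F, h * h = -1 ∧ h * A * h⁻¹ = A⁻¹ := by
  obtain ⟨x, y, z, h1, h2⟩ := existsRev' hodd (det_one A)
    (by rwa [trace_fin_two] at h4)
  set m : Matrix (Fin 2) (Fin 2) F := !![x, y; z, -x] with hm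
  have hmdet : m.det = 1 := by rw [hm, det_fin_two_of]; linear_combination h2
  have hmtr : m.trace = 0 := by simp [hm, trace_fin_two_of]
  have hmtrA : (m * A.val).trace = 0 := by
    have : (m * A.val).trace = x * A.val 0 0 + y * A.val 1 0 + (z * A.val 0 1 + -x * A.val 1 1) := by
      simp [trace_fin_two, mul_apply, Fin.sum_univ_two, hm, Matrix.vecMul, dotProduct]
    rw [this]; linear_combination h1
  have key : m * A.val + A.val * m = (A.val).trace • m := by
    have h := mul_add_mul (A := A.val) (B := m)
    rw [hmtr, hmtrA] at h
    simpa using h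
  refine ⟨@id (Matrix.SpecialLinearGroup (Fin 2) F) ⟨m, hmdet⟩, ?_, ?_⟩
  · apply Subtype.ext
    rw [Matrix.SpecialLinearGroup.coe_mul]
    show m * m = _
    rw [cayley, hmtr, hmdet]
    simp
  · rw [mul_inv_eq_iff_eq_mul]
    apply Subtype.ext
    rw [Matrix.SpecialLinearGroup.coe_mul, Matrix.SpecialLinearGroup.coe_mul,
      Matrix.SpecialLinearGroup.coe_inv, adj2]
    show m * A.val = _ * m
    rw [sub_mul, smul_mul_assoc, one_mul]
    exact eq_sub_of_add_eq key


/-- nonscalar matrices in SL2 with trace² ≠ 4 -/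
lemma nonscalar (A : Matrix.SpecialLinearGroup (Fin 2) F) (h4 : ((A.val).trace)^2 ≠ 4) :
    A.val 0 1 ≠ 0 ∨ A.val 1 0 ≠ 0 ∨ A.val 0 0 ≠ A.val 1 1 := by
  by_contra h
  push_neg at h
  obtain ⟨hb, hc, had⟩ := h
  apply h4
  have hd := det_one A
  rw [hb, had] at hd
  rw [trace_fin_two, had]
  linear_combination (4:F) * hd

lemma conjMat' {a b c d : F} (hd : a * d - b * c = 1)
    (hns : b ≠ 0 ∨ c ≠ 0 ∨ a ≠ d) :
    ∃ P : Matrix (Fin 2) (Fin 2) F, P.det ≠ 0 ∧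
      !![a, b; c, d] * P = P * !![0, -1; 1, a + d] := by
  by_cases hb : b ≠ 0
  · refine ⟨!![0, b; 1, d], by simp [det_fin_two_of, hb], ?_⟩
    rw [mul_fin_two, mul_fin_two]
    ext i j
    fin_cases i <;> fin_cases j <;> simp <;> first | ring1 | linear_combination hd | linear_combination -hd
  · push_neg at hb
    by_cases hc : c ≠ 0
    · refine ⟨!![1, a; 0, c], by simp [det_fin_two_of, hc], ?_⟩
      rw [mul_fin_two, mul_fin_two]
      ext i j
      fin_cases i <;> fin_cases j <;> simp <;> first | ring1 | linear_combination hd | linear_combination -hd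
    · push_neg at hc
      have had : a ≠ d := by
        rcases hns with h' | h' | h'
        · exact absurd hb h'
        · exact absurd hc h'
        · exact h'
      refine ⟨!![1, a; 1, d], by simp [det_fin_two_of, sub_ne_zero.mpr (Ne.symm had)], ?_⟩
      rw [mul_fin_two, mul_fin_two]
      ext i j
      fin_cases i <;> fin_cases j <;> simp [hb, hc] <;> first | ring1 | linear_combination hd | linear_combination -hd | linear_combination -hd - c * hb | linear_combination -hd - b * hc

/-- Conjugating a nonscalar SL2 matrix to its companion matrix, over GL2. -/
lemma conjMat (A : Matrix.SpecialLinearGroup (Fin 2) F)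
    (hns : A.val 0 1 ≠ 0 ∨ A.val 1 0 ≠ 0 ∨ A.val 0 0 ≠ A.val 1 1) :
    ∃ P : Matrix (Fin 2) (Fin 2) F, P.det ≠ 0 ∧
      A.val * P = P * (comp ((A.val).trace)).val := by
  obtain ⟨P, hP, hconj⟩ := conjMat' (det_one A) hns
  refine ⟨P, hP, ?_⟩
  have h1 : (comp ((A.val).trace)).val = !![0, -1; 1, A.val 0 0 + A.val 1 1] := by
    rw [trace_fin_two]; rfl
  rw [h1]
  nth_rewrite 1 [eta_fin_two A.val]
  exact hconj

lemma adj_conj {P A C : Matrix (Fin 2) (Fin 2) F} (hdet : P.det ≠ 0)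
    (h : A * P = P * C) : adjugate P * A = C * adjugate P := by
  have h2 : P.det • (adjugate P * A) = P.det • (C * adjugate P) := by
    calc P.det • (adjugate P * A)
        = adjugate P * A * (P.det • (1 : Matrix (Fin 2) (Fin 2) F)) := by
          rw [mul_smul_comm, mul_one]
      _ = adjugate P * A * (P * adjugate P) := by rw [mul_adjugate]
      _ = adjugate P * (A * P) * adjugate P := by simp only [mul_assoc]
      _ = adjugate P * (P * C) * adjugate P := by rw [h]
      _ = (adjugate P * P) * (C * adjugate P) := by simp only [mul_assoc]
      _ = (P.det • (1 : Matrix (Fin 2) (Fin 2) F)) * (C * adjugate P) := by rw [adjugate_mul]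
      _ = P.det • (C * adjugate P) := by rw [smul_mul_assoc, one_mul]
  have h3 := congrArg (fun X => (P.det)⁻¹ • X) h2
  simpa [smul_smul, inv_mul_cancel₀ hdet] using h3


/-- Elements of SL₂ with equal trace `t`, `t² ≠ 4`, are conjugate in SL₂. -/
lemma conjSL [Fintype F] (hodd : Fintype.card F % 2 = 1)
    (A B : Matrix.SpecialLinearGroup (Fin 2) F)
    (htr : (A.val).trace = (B.val).trace) (h4 : ((A.val).trace)^2 ≠ 4) : IsConj A B := by
  set t := (A.val).trace with hts
  obtain ⟨P, hP, hPc⟩ := conjMat A (nonscalar A h4)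
  obtain ⟨P', hP', hPc'⟩ := conjMat B (nonscalar B (htr ▸ h4))
  rw [← htr] at hPc'
  -- find Z = u•1 + v•C with det Z = ((det P) * (det P'))⁻¹
  have hβ : (4:F) - t^2 ≠ 0 := by
    intro h; apply h4; linear_combination -h
  obtain ⟨U, V, hUV⟩ := quadSolve hodd (one_ne_zero (α := F)) hβ ((P.det) * (P'.det))⁻¹
  set Z : Matrix (Fin 2) (Fin 2) F := (U - t * V) • 1 + (2 * V) • (comp t).val with hZ
  have hZdet : Z.det = (P.det * P'.det)⁻¹ := by
    have : Z = !![U - t*V, -(2*V); 2*V, U + t*V] := by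
      rw [hZ]; show _ + _ • (!![0,-1;1,t]) = _
      ext i j; fin_cases i <;> fin_cases j <;>
        simp [one_fin_two, Matrix.add_apply, Matrix.smul_apply, smul_eq_mul] <;> ring
    rw [this, det_fin_two_of]
    linear_combination hUV
  have hZC : Z * (comp t).val = (comp t).val * Z := by
    rw [hZ]; rw [add_mul, mul_add]
    rw [smul_mul_assoc, one_mul, mul_smul_comm, mul_one, smul_mul_assoc, mul_smul_comm]
  have hZne : Z.det ≠ 0 := by
    rw [hZdet]
    exact inv_ne_zero (mul_ne_zero hP hP')
  set Q : Matrix (Fin 2) (Fin 2) F := P' * Z * adjugate P with hQ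
  have hQdet : Q.det = 1 := by
    rw [hQ, det_mul, det_mul, det_adjugate, hZdet]
    have : Fintype.card (Fin 2) - 1 = 1 := rfl
    rw [this, pow_one]
    field_simp
  have hQA : Q * A.val = B.val * Q := by
    have h1 : adjugate P * A.val = (comp t).val * adjugate P := adj_conj hP hPc
    calc Q * A.val = P' * Z * (adjugate P * A.val) := by rw [hQ]; simp only [mul_assoc]
      _ = P' * Z * ((comp t).val * adjugate P) := by rw [h1]
      _ = P' * (Z * (comp t).val) * adjugate P := by simp only [mul_assoc]
      _ = P' * ((comp t).val * Z) * adjugate P := by rw [hZC]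
      _ = (P' * (comp t).val) * Z * adjugate P := by simp only [mul_assoc]
      _ = (B.val * P') * Z * adjugate P := by rw [hPc']
      _ = B.val * Q := by rw [hQ]; simp only [mul_assoc]
  rw [isConj_iff]
  refine ⟨@id (Matrix.SpecialLinearGroup (Fin 2) F) ⟨Q, hQdet⟩, ?_⟩
  rw [mul_inv_eq_iff_eq_mul]
  apply Subtype.ext
  rw [Matrix.SpecialLinearGroup.coe_mul, Matrix.SpecialLinearGroup.coe_mul]
  show Q * A.val = B.val * Q
  exact hQA


lemma two_ne (hns : ¬ IsSquare (-1 : F)) : (2:F) ≠ 0 := by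
  intro h
  exact hns ⟨1, by rw [mul_one]; linear_combination -h⟩

/-- trace is invariant under conjugation in SL2. -/
lemma trace_conj (B A : Matrix.SpecialLinearGroup (Fin 2) F) :
    (((B * A * B⁻¹ : Matrix.SpecialLinearGroup (Fin 2) F)).val).trace = (A.val).trace := by
  rw [Matrix.SpecialLinearGroup.coe_mul, Matrix.SpecialLinearGroup.coe_mul,
    Matrix.SpecialLinearGroup.coe_inv, trace_mul_comm, ← mul_assoc, adjugate_mul, B.2,
    one_smul, one_mul]

/-- trace of the inverse equals the trace. -/
lemma trace_inv (A : Matrix.SpecialLinearGroup (Fin 2) F) :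
    ((A⁻¹ : Matrix.SpecialLinearGroup (Fin 2) F)).val.trace = (A.val).trace := by
  rw [Matrix.SpecialLinearGroup.coe_inv, adj2, trace_sub, trace_smul, trace_one, smul_eq_mul]
  ring_nf
  simp [Fintype.card_fin]
  ring

/-- A nontrivial trace-2 element of SL2 is not conjugate to ± its inverse
when -1 is not a square. -/
lemma unip_not_real (hns : ¬ IsSquare (-1 : F))
    (A B : Matrix.SpecialLinearGroup (Fin 2) F) (htA : (A.val).trace = 2) (hA1 : A ≠ 1) :
    ¬ (B * A * B⁻¹ = A⁻¹ ∨ B * A * B⁻¹ = -A⁻¹) := by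
  have h2 : (2:F) ≠ 0 := two_ne hns
  rintro (hB | hB)
  · -- conjugate to inverse: contradiction with -1 not a square
    have hnsA : A.val 0 1 ≠ 0 ∨ A.val 1 0 ≠ 0 ∨ A.val 0 0 ≠ A.val 1 1 := by
      by_contra hcon
      push_neg at hcon
      obtain ⟨hb, hc, had⟩ := hcon
      apply hA1
      have ha1 : A.val 0 0 = 1 := by
        have : A.val 0 0 + A.val 1 1 = 2 := by rw [← trace_fin_two]; exact htA
        rw [← had] at this
        have h3 : (2:F) * A.val 0 0 = 2 * 1 := by linear_combination this
        exact mul_left_cancel₀ h2 h3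
      apply Subtype.ext
      rw [eta_fin_two A.val, hb, hc, ← had, ha1]
      exact one_fin_two.symm
    obtain ⟨P, hP, hPc⟩ := conjMat A hnsA
    rw [htA] at hPc
    -- matrix form of the conjugation equation
    rw [mul_inv_eq_iff_eq_mul] at hB
    have hBm : B.val * A.val = adjugate A.val * B.val := by
      have := congrArg (fun X : Matrix.SpecialLinearGroup (Fin 2) F => X.val) hB
      simpa [Matrix.SpecialLinearGroup.coe_mul, Matrix.SpecialLinearGroup.coe_inv] using this
    have hBA : B.val * A.val + A.val * B.val = (2:F) • B.val := by
      rw [hBm, adj2, htA, sub_mul, smul_mul_assoc, one_mul]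
      abel
    -- move to companion coordinates
    set Cv : Matrix (Fin 2) (Fin 2) F := !![0, -1; 1, 2] with hCv
    have hCv' : (comp (2:F)).val = Cv := rfl
    rw [hCv'] at hPc
    have hadj : adjugate P * A.val = Cv * adjugate P := adj_conj hP hPc
    set D : Matrix (Fin 2) (Fin 2) F := adjugate P * B.val * P with hD
    have hE : D * Cv + Cv * D = (2:F) • D := by
      have e1 : D * Cv = adjugate P * (B.val * A.val) * P := by
        calc D * Cv = adjugate P * B.val * (P * Cv) := by simp only [hD, mul_assoc]
          _ = adjugate P * B.val * (A.val * P) := by rw [← hPc]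
          _ = adjugate P * (B.val * A.val) * P := by simp only [mul_assoc]
      have e2 : Cv * D = adjugate P * (A.val * B.val) * P := by
        calc Cv * D = (Cv * adjugate P) * (B.val * P) := by simp only [hD, mul_assoc]
          _ = (adjugate P * A.val) * (B.val * P) := by rw [hadj]
          _ = adjugate P * (A.val * B.val) * P := by simp only [mul_assoc]
      rw [e1, e2, ← add_mul, ← mul_add, hBA]
      rw [mul_smul_comm, smul_mul_assoc]
    have hDdet : D.det = P.det ^ 2 := by
      rw [hD, det_mul, det_mul, det_adjugate, B.2]
      have : Fintype.card (Fin 2) - 1 = 1 := rfl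
      rw [this, pow_one]
      ring
    -- extract entries
    have e00 := congr_fun (congr_fun hE 0) 0
    have e01 := congr_fun (congr_fun hE 0) 1
    have e10 := congr_fun (congr_fun hE 1) 0
    simp only [Matrix.add_apply, Matrix.smul_apply, smul_eq_mul, Matrix.mul_apply,
      Fin.sum_univ_two, hCv] at e00 e01 e10
    norm_num at e00 e01 e10
    -- e00 : D 0 1 - D 1 0 = 2 * D 0 0  (roughly)
    have hdet2 : D.det = -(D 0 0 + D 1 0)^2 := by
      rw [det_fin_two]
      linear_combination (D 0 0) * e10 + (- D 1 0) * e00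
    have hpr : D 0 0 + D 1 0 ≠ 0 := by
      intro h
      rw [h] at hdet2
      rw [hdet2] at hDdet
      have : P.det = 0 := by
        have h4 : P.det ^ 2 = 0 := by rw [← hDdet]; ring
        exact pow_eq_zero_iff (n := 2) (by norm_num) |>.mp h4
      exact hP this
    apply hns
    refine ⟨P.det * (D 0 0 + D 1 0)⁻¹, ?_⟩
    have hsq : P.det ^ 2 = -(D 0 0 + D 1 0)^2 := by rw [← hDdet, hdet2]
    field_simp
    linear_combination -hsq
  · -- conjugate to minus inverse: trace contradiction
    have h1 := trace_conj B A
    rw [hB] at h1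
    have h2' : ((-A⁻¹ : Matrix.SpecialLinearGroup (Fin 2) F)).val.trace
        = -((A⁻¹ : Matrix.SpecialLinearGroup (Fin 2) F)).val.trace := by
      rw [Matrix.SpecialLinearGroup.coe_neg, trace_neg]
    rw [h2', trace_inv, htA] at h1
    apply h2
    have : (2:F) * 2 = 0 := by linear_combination -h1
    rcases mul_eq_zero.mp this with h' | h' <;> exact h'


/-- the quotient map onto PSL2 -/
def pr (F : Type*) [Field F] : Matrix.SpecialLinearGroup (Fin 2) F →* PSL2 F :=
  QuotientGroup.mk' (Subgroup.center (Matrix.SpecialLinearGroup (Fin 2) F))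

lemma center_iff (A : Matrix.SpecialLinearGroup (Fin 2) F) :
    A ∈ Subgroup.center (Matrix.SpecialLinearGroup (Fin 2) F) ↔ A = 1 ∨ A = -1 := by
  rw [Matrix.SpecialLinearGroup.mem_center_iff]
  constructor
  · rintro ⟨r, hr, hsc⟩
    rw [Fintype.card_fin] at hr
    have : (r - 1) * (r + 1) = 0 := by linear_combination hr
    rcases mul_eq_zero.mp this with h | h
    · left
      apply Subtype.ext
      rw [← hsc, show r = 1 by linear_combination h]
      simp
    · right
      apply Subtype.ext
      rw [← hsc, show r = -1 by linear_combination h]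
      rw [Matrix.SpecialLinearGroup.coe_neg, Matrix.SpecialLinearGroup.coe_one, scalar_apply]
      ext i j
      by_cases hij : i = j <;>
        simp [Matrix.diagonal_apply, Matrix.neg_apply, Matrix.one_apply, hij]
  · rintro (rfl | rfl)
    · exact ⟨1, by simp, by simp⟩
    · refine ⟨-1, by simp [Fintype.card_fin], ?_⟩
      rw [Matrix.SpecialLinearGroup.coe_neg, Matrix.SpecialLinearGroup.coe_one, scalar_apply]
      ext i j
      by_cases hij : i = j <;>
        simp [Matrix.diagonal_apply, Matrix.neg_apply, Matrix.one_apply, hij]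

lemma pr_neg (A : Matrix.SpecialLinearGroup (Fin 2) F) : pr F (-A) = pr F A := by
  rw [pr, QuotientGroup.mk'_eq_mk']
  exact ⟨-1, (center_iff _).mpr (Or.inr rfl), by simp⟩

lemma pr_surj : Function.Surjective (pr F) := QuotientGroup.mk'_surjective _

/-- lifting conjugacy from PSL2 to SL2 -/
lemma psl_conj_lift {a b : Matrix.SpecialLinearGroup (Fin 2) F}
    (h : IsConj (pr F a) (pr F b)) :
    ∃ C : Matrix.SpecialLinearGroup (Fin 2) F, C * a * C⁻¹ = b ∨ C * a * C⁻¹ = -b := by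
  rw [isConj_iff] at h
  obtain ⟨c, hc⟩ := h
  obtain ⟨C, rfl⟩ := pr_surj c
  rw [← map_inv (pr F), ← _root_.map_mul (pr F), ← _root_.map_mul (pr F)] at hc
  rw [pr, QuotientGroup.mk'_eq_mk'] at hc
  obtain ⟨n, hn, hcn⟩ := hc
  rcases (center_iff n).mp hn with rfl | rfl
  · exact ⟨C, Or.inl (by rw [← hcn, mul_one])⟩
  · exact ⟨C, Or.inr (by rw [← hcn]; simp)⟩

/-- counting squares -/
lemma card_sq [Fintype F] (h2 : (2:F) ≠ 0) [DecidableEq F] :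
    2 * (Finset.image (fun x : F => x * x) Finset.univ).card = Fintype.card F + 1 := by
  classical
  set s := Finset.image (fun x : F => x * x) Finset.univ with hs
  have h0 : (0:F) ∈ s := by
    rw [hs]; exact Finset.mem_image.mpr ⟨0, Finset.mem_univ _, by ring⟩
  have hcard : (Finset.univ : Finset F).card
      = ∑ b ∈ s, (Finset.univ.filter (fun x : F => x * x = b)).card :=
    Finset.card_eq_sum_card_fiberwise (fun x _ => Finset.mem_image_of_mem _ (Finset.mem_univ x))
  have hfib : ∀ b ∈ s, (Finset.univ.filter (fun x : F => x * x = b)).card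
      + (if b = 0 then 1 else 0) = 2 := by
    intro b hb
    obtain ⟨a, _, ha⟩ := Finset.mem_image.mp hb
    by_cases hb0 : b = 0
    · subst hb0
      rw [if_pos rfl]
      have : (Finset.univ.filter (fun x : F => x * x = 0)) = {0} := by
        ext x; simp [mul_self_eq_zero]
      rw [this]
      simp
    · rw [if_neg hb0]
      have ha0 : a ≠ 0 := by rintro rfl; exact hb0 (by rw [← ha]; ring)
      have : (Finset.univ.filter (fun x : F => x * x = b)) = {a, -a} := by
        ext x
        simp only [Finset.mem_filter, Finset.mem_univ, true_and, Finset.mem_insert,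
          Finset.mem_singleton]
        rw [← ha]
        exact mul_self_eq_mul_self_iff
      rw [this, add_zero]
      rw [Finset.card_pair]
      intro hx
      apply ha0
      have : (2:F) * a = 0 := by linear_combination hx
      rcases mul_eq_zero.mp this with h' | h'
      · exact absurd h' h2
      · exact h'
  have hsum : ∑ b ∈ s, ((Finset.univ.filter (fun x : F => x * x = b)).card
      + (if b = 0 then 1 else 0)) = 2 * s.card := by
    rw [Finset.sum_congr rfl hfib]
    rw [Finset.sum_const, smul_eq_mul, mul_comm]
  rw [Finset.sum_add_distrib] at hsum
  have hif : ∑ b ∈ s, (if b = 0 then 1 else 0) = 1 := by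
    rw [Finset.sum_ite_eq' s 0 (fun _ => 1)]
    simp [h0]
  rw [hif, ← hcard] at hsum
  rw [← hsum, Finset.card_univ]

/-- transport of range cardinality along fiber-equivalent maps -/
lemma range_card {α β γ : Type*} (f : α → β) (e : α → γ)
    (h : ∀ x y, f x = f y ↔ e x = e y) :
    Nat.card (Set.range f) = Nat.card (Set.range e) := by
  have hbij : Function.Bijective (fun p : Set.range f =>
      (⟨e (Classical.choose p.2), Set.mem_range_self _⟩ : Set.range e)) := by
    constructor
    · rintro ⟨x, hx⟩ ⟨y, hy⟩ hxy
      simp only [Subtype.mk.injEq] at hxy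
      have h1 : f (Classical.choose hx) = x := Classical.choose_spec hx
      have h2 : f (Classical.choose hy) = y := Classical.choose_spec hy
      apply Subtype.ext
      simp only
      rw [← h1, ← h2]
      exact (h _ _).mpr hxy
    · rintro ⟨c, x, rfl⟩
      refine ⟨⟨f x, Set.mem_range_self _⟩, ?_⟩
      apply Subtype.ext
      simp only
      exact (h _ _).mp (Classical.choose_spec (Set.mem_range_self (f := f) x))
  exact Nat.card_eq_of_bijective _ hbij


lemma sq_eq_four (h2 : (2:F) ≠ 0) {t : F} : t ^ 2 = 4 ↔ t = 2 ∨ t = -2 := by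
  constructor
  · intro h
    have h' : (t - 2) * (t + 2) = 0 := by linear_combination h
    rcases mul_eq_zero.mp h' with h'' | h''
    · exact Or.inl (sub_eq_zero.mp h'')
    · exact Or.inr (eq_neg_of_add_eq_zero_left h'')
  · rintro (rfl | rfl) <;> ring

lemma isconj_one {G : Type*} [Group G] {x : G} (h : IsConj x 1) : x = 1 := by
  obtain ⟨c, hc⟩ := isConj_iff.mp h.symm
  rw [← hc]; simp

lemma comp_not_center (t : F) :
    comp t ∉ Subgroup.center (Matrix.SpecialLinearGroup (Fin 2) F) := by
  intro h
  rcases (center_iff _).mp h with h1 | h1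
  · have hcc : (comp t).val 1 0 = ((1 : Matrix.SpecialLinearGroup (Fin 2) F)).val 1 0 := by
      rw [h1]
    rw [Matrix.SpecialLinearGroup.coe_one] at hcc
    simp [comp, Matrix.one_apply] at hcc
  · have hcc : (comp t).val 1 0 = ((-1 : Matrix.SpecialLinearGroup (Fin 2) F)).val 1 0 := by
      rw [h1]
    rw [Matrix.SpecialLinearGroup.coe_neg, Matrix.SpecialLinearGroup.coe_one] at hcc
    simp [comp, Matrix.neg_apply, Matrix.one_apply] at hcc

lemma real_lift [Fintype F] (hns : ¬IsSquare (-1 : F))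
    (A : Matrix.SpecialLinearGroup (Fin 2) F) (htA : (A.val).trace = 2)
    (hg : IsConj (pr F A) (pr F A)⁻¹) : A = 1 := by
  by_contra hA1
  rw [← map_inv (pr F)] at hg
  obtain ⟨C, hC⟩ := psl_conj_lift hg
  exact unip_not_real hns A C htA hA1 hC

lemma lift_one_of_real [Fintype F] (hns : ¬IsSquare (-1 : F)) (h2 : (2:F) ≠ 0)
    (A : Matrix.SpecialLinearGroup (Fin 2) F) (h4 : ((A.val).trace) ^ 2 = 4)
    (hg : IsConj (pr F A) (pr F A)⁻¹) : pr F A = 1 ∧ (A = 1 ∨ A = -1) := by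
  rcases (sq_eq_four h2).mp h4 with ht | ht
  · have h1 := real_lift hns A ht hg
    exact ⟨by rw [h1]; exact _root_.map_one _, Or.inl h1⟩
  · have hgneg : IsConj (pr F (-A)) (pr F (-A))⁻¹ := by rwa [pr_neg]
    have hneg : (((-A : Matrix.SpecialLinearGroup (Fin 2) F)).val).trace = 2 := by
      rw [Matrix.SpecialLinearGroup.coe_neg, trace_neg, ht]; ring
    have h1 := real_lift hns (-A) hneg hgneg
    have hA : A = -1 := by rw [← neg_neg A, h1]
    constructor
    · rw [hA, pr_neg, _root_.map_one]
    · exact Or.inr hA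

/-- reality of nonspecial companion classes in PSL2. -/
lemma comp_real [Fintype F] (hodd : Fintype.card F % 2 = 1) {t : F} (h4 : t ^ 2 ≠ 4) :
    IsConj (pr F (comp t)) (pr F (comp t))⁻¹ := by
  obtain ⟨h0, _, hrev⟩ := rev hodd (comp t) (by rw [trace_comp]; exact h4)
  rw [← map_inv (pr F)]
  exact (pr F).map_isConj (isConj_iff.mpr ⟨h0, hrev⟩)

end SR18

theorem stmt_18 {F : Type*} [Field F] [Fintype F] (hq : Fintype.card F % 4 = 3) :
    Nat.card {c : ConjClasses (PSL2 F) | ∃ g : PSL2 F, ConjClasses.mk g = c ∧ IsConj g g⁻¹} =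
      (Fintype.card F + 1) / 2 ∧
    ∀ g : PSL2 F, IsConj g g⁻¹ → ∃ h : PSL2 F, h ^ 2 = 1 ∧ h * g * h⁻¹ = g⁻¹ := by
  classical
  open SR18 in
  have hodd : Fintype.card F % 2 = 1 := by omega
  have hns : ¬ IsSquare (-1 : F) := by
    rw [FiniteField.isSquare_neg_one_iff]
    simp [hq]
  have h2 : (2:F) ≠ 0 := two_ne hns
  constructor
  · -- counting real classes
    set f : F → ConjClasses (PSL2 F) := fun t =>
      if t ^ 2 = 4 then ConjClasses.mk (1 : PSL2 F)
      else ConjClasses.mk (pr F (comp t)) with hf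
    have hcompne : ∀ t : F, ConjClasses.mk (pr F (comp t)) ≠ ConjClasses.mk (1 : PSL2 F) := by
      intro t h
      rw [ConjClasses.mk_eq_mk_iff_isConj] at h
      have h1 : pr F (comp t) = 1 := isconj_one h
      have h1' : ((comp t : Matrix.SpecialLinearGroup (Fin 2) F) : PSL2 F) = 1 := h1
      rw [QuotientGroup.eq_one_iff] at h1'
      exact comp_not_center t h1'
    have hfib : ∀ t s : F, f t = f s ↔ t * t = s * s := by
      intro t s
      constructor
      · intro h
        by_cases h4t : t ^ 2 = 4 <;> by_cases h4s : s ^ 2 = 4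
        · have : t ^ 2 = s ^ 2 := by rw [h4t, h4s]
          linear_combination this
        · rw [hf] at h
          simp only [if_pos h4t, if_neg h4s] at h
          exact absurd h.symm (hcompne s)
        · rw [hf] at h
          simp only [if_neg h4t, if_pos h4s] at h
          exact absurd h (hcompne t)
        · rw [hf] at h
          simp only [if_neg h4t, if_neg h4s] at h
          rw [ConjClasses.mk_eq_mk_iff_isConj] at h
          obtain ⟨C, hC | hC⟩ := psl_conj_lift h
          · have := trace_conj C (comp t)
            rw [hC] at this
            simp only [trace_comp] at this
            rw [this]
          · have := trace_conj C (comp t)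
            rw [hC] at this
            rw [Matrix.SpecialLinearGroup.coe_neg, trace_neg, trace_comp, trace_comp] at this
            linear_combination (s - t) * this
      · intro h
        have hts : t = s ∨ t = -s := by
          have h' : (t - s) * (t + s) = 0 := by linear_combination h
          rcases mul_eq_zero.mp h' with h'' | h''
          · exact Or.inl (sub_eq_zero.mp h'')
          · exact Or.inr (eq_neg_of_add_eq_zero_left h'')
        rcases hts with rfl | rfl
        · rfl
        · have h44 : (-s) ^ 2 = s ^ 2 := by ring
          by_cases h4s : s ^ 2 = 4
          · rw [hf]; simp only [h44, if_pos h4s]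
          · rw [hf]; simp only [h44, if_neg h4s]
            rw [ConjClasses.mk_eq_mk_iff_isConj]
            have hconj : IsConj (comp (-s)) (-(comp s)) := by
              apply conjSL hodd
              · rw [trace_comp, Matrix.SpecialLinearGroup.coe_neg, trace_neg, trace_comp]
              · rw [trace_comp]; rwa [h44]
            have := (pr F).map_isConj hconj
            rwa [pr_neg] at this
    have hrange : {c : ConjClasses (PSL2 F) | ∃ g : PSL2 F, ConjClasses.mk g = c ∧ IsConj g g⁻¹}
        = Set.range f := by
      ext c
      constructor
      · rintro ⟨g, rfl, hreal⟩
        obtain ⟨A, rfl⟩ := pr_surj g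
        by_cases h4 : ((A.val).trace) ^ 2 = 4
        · obtain ⟨hone, -⟩ := lift_one_of_real hns h2 A h4 hreal
          refine ⟨(A.val).trace, ?_⟩
          rw [hf]
          simp only [if_pos h4]
          rw [hone]
        · refine ⟨(A.val).trace, ?_⟩
          rw [hf]
          simp only [if_neg h4]
          rw [ConjClasses.mk_eq_mk_iff_isConj]
          have hconj : IsConj (comp ((A.val).trace)) A := by
            apply conjSL hodd
            · rw [trace_comp]
            · rw [trace_comp]; exact h4
          exact (pr F).map_isConj hconj
      · rintro ⟨t, rfl⟩
        by_cases h4 : t ^ 2 = 4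
        · refine ⟨1, ?_, by rw [inv_one]⟩
          rw [hf]; simp only [if_pos h4]
        · refine ⟨pr F (comp t), ?_, comp_real hodd h4⟩
          rw [hf]; simp only [if_neg h4]
    rw [hrange, range_card f (fun x : F => x * x) hfib]
    have himg : Set.range (fun x : F => x * x)
        = ↑(Finset.image (fun x : F => x * x) Finset.univ) := by
      rw [Finset.coe_image, Finset.coe_univ, Set.image_univ]
    rw [himg, Nat.card_coe_set_eq, Set.ncard_coe_finset]
    have := card_sq (F := F) h2
    omega
  · -- strong reality
    intro g hg
    obtain ⟨A, rfl⟩ := pr_surj g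
    by_cases h4 : ((A.val).trace) ^ 2 = 4
    · obtain ⟨hone, -⟩ := lift_one_of_real hns h2 A h4 hg
      exact ⟨1, one_pow 2, by rw [hone]; simp⟩
    · obtain ⟨h0, hh0, hrev⟩ := rev hodd A h4
      refine ⟨pr F h0, ?_, ?_⟩
      · rw [pow_two, ← _root_.map_mul (pr F), hh0]
        rw [show (-1 : Matrix.SpecialLinearGroup (Fin 2) F) = -(1) from rfl, pr_neg, _root_.map_one]
      · simp only [← map_inv (pr F), ← _root_.map_mul (pr F)]
        rw [hrev]
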